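/- Order-1 boundary arc (current constraint): let s₁ ∈ {−1,1} and suppose x : I → ℝ³ is absolutely continuous on a nondegenerate interval I, solves ẋ = F₀(x) + uF₁(x) a.e. for a measurable control u, and satisfies x₁(t) = s₁ for all t ∈ I. Then the constraint g₁(x) = s₁x₁ − 1 is of order 1 (the derivative of g₁ along F₁ equals s₁c₇ ≠ 0) and the feedback boundary control is u(t) = −(c₁s₁ + c₂x₃(t))/c₇ for a.e. t ∈ I. If moreover p : I → ℝ³ and η : I → ℝ satisfy a.e. the constrained adjoint equation ṗ = −p·(F₀'(x) + uF₁'(x)) − η·∇g₁(x) with p₁ ≡ 0 on I, then the multiplier is η(t) = −s₁c₅p₃(t) on I. -/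

import Mathlib

open MeasureTheory

noncomputable section

/-- Drift vector field of the electric vehicle. -/
def F0 (c1 c2 c3 c4 c5 c6 : ℝ) (x : Fin 3 → ℝ) : Fin 3 → ℝ :=
  ![c1 * x 0 + c2 * x 2, c3 * x 2, c4 + c5 * x 0 + c6 * (x 2) ^ 2]

/-- Control vector field of the electric vehicle. -/
def F1 (c7 : ℝ) (_x : Fin 3 → ℝ) : Fin 3 → ℝ := ![c7, 0, 0]

/-- Order-1 boundary arc (current constraint `g₁(x) = s₁x₁ − 1`): the constraint
is of order 1 (`F₁·g₁ = s₁c₇ ≠ 0`), the feedback boundary control is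
`u = −(c₁s₁ + c₂x₃)/c₇` a.e., and if `(p, η)` satisfies the constrained adjoint
equation with `p₁ ≡ 0` then `η = −s₁c₅p₃` a.e. on the arc. -/

lemma interior_ae (I : Set ℝ) (hI : I.OrdConnected) :
    ∀ᵐ t ∂volume, t ∈ I → t ∈ interior I := by
  have hconv : Convex ℝ I := by
    exact convex_iff_ordConnected.mpr hI
  have hfr : volume (frontier I) = 0 := hconv.addHaar_frontier volume
  have : ∀ᵐ t ∂volume, t ∉ frontier I := by
    rw [ae_iff]; simpa using hfr
  filter_upwards [this] with t ht htI
  rcases (em (t ∈ interior I)) with h | h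
  · exact h
  · exact absurd ⟨subset_closure htI, h⟩ ht

lemma const_deriv (I : Set ℝ) (f : ℝ → ℝ) (c : ℝ) (hf : ∀ t ∈ I, f t = c)
    (t : ℝ) (ht : t ∈ interior I) : HasDerivAt f 0 t := by
  apply (hasDerivAt_const t c).congr_of_eventuallyEq
  filter_upwards [isOpen_interior.mem_nhds ht] with s hs
  exact hf s (interior_subset hs)

theorem stmt12 (c1 c2 c3 c4 c5 c6 c7 : ℝ)
    (h1 : c1 < 0) (h2 : c2 < 0) (h3 : 0 < c3) (h4 : c4 < 0)
    (h5 : 0 < c5) (h6 : c6 < 0) (h7 : 0 < c7)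
    (s1 : ℝ) (hs1 : s1 = 1 ∨ s1 = -1)
    (I : Set ℝ) (hI : I.OrdConnected) (a b : ℝ) (ha : a ∈ I) (hb : b ∈ I) (hab : a < b)
    (x : ℝ → Fin 3 → ℝ) (u : ℝ → ℝ) (hu : Measurable u)
    (hcx : ContinuousOn x I)
    (hode : ∀ᵐ t ∂volume, t ∈ I →
      HasDerivAt (fun s => x s 0) (c1 * x t 0 + c2 * x t 2 + u t * c7) t ∧
      HasDerivAt (fun s => x s 1) (c3 * x t 2) t ∧
      HasDerivAt (fun s => x s 2) (c4 + c5 * x t 0 + c6 * (x t 2) ^ 2) t)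
    (hbdry : ∀ t ∈ I, x t 0 = s1) :
    (∀ y : Fin 3 → ℝ,
      fderiv ℝ (fun w : Fin 3 → ℝ => s1 * w 0 - 1) y (F1 c7 y) = s1 * c7 ∧ s1 * c7 ≠ 0) ∧
    (∀ᵐ t ∂volume, t ∈ I → u t = -(c1 * s1 + c2 * x t 2) / c7) ∧
    (∀ (p : ℝ → Fin 3 → ℝ) (η : ℝ → ℝ),
      (∀ᵐ t ∂volume, t ∈ I →
        HasDerivAt (fun s => p s 0) (-(c1 * p t 0 + c5 * p t 2) - η t * s1) t ∧
        HasDerivAt (fun s => p s 1) 0 t ∧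
        HasDerivAt (fun s => p s 2) (-(c2 * p t 0 + c3 * p t 1 + 2 * c6 * x t 2 * p t 2)) t) →
      (∀ t ∈ I, p t 0 = 0) →
      ∀ᵐ t ∂volume, t ∈ I → η t = -s1 * c5 * p t 2) := by
  have hs1sq : s1 * s1 = 1 := by rcases hs1 with h | h <;> simp [h]
  have hs1ne : s1 ≠ 0 := by rcases hs1 with h | h <;> simp [h]
  have hint := interior_ae I hI
  refine ⟨?_, ?_, ?_⟩
  · intro y
    have hd : HasFDerivAt (fun w : Fin 3 → ℝ => s1 * w 0 - 1)
        (s1 • (ContinuousLinearMap.proj 0 : (Fin 3 → ℝ) →L[ℝ] ℝ)) y :=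
      ((ContinuousLinearMap.proj 0 : (Fin 3 → ℝ) →L[ℝ] ℝ).hasFDerivAt.const_mul s1).sub_const 1
    refine ⟨?_, ?_⟩
    · rw [hd.fderiv]
      simp [F1]
    · exact mul_ne_zero hs1ne (ne_of_gt h7)
  · filter_upwards [hode, hint] with t hode' hint' htI
    have h0 : HasDerivAt (fun s => x s 0) 0 t :=
      const_deriv I (fun s => x s 0) s1 hbdry t (hint' htI)
    have := (hode' htI).1.unique h0
    have hx0 := hbdry t htI
    rw [hx0] at this
    field_simp
    linarith
  · intro p η hadj hp0
    filter_upwards [hadj, hint] with t hadj' hint' htI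
    have h0 : HasDerivAt (fun s => p s 0) 0 t :=
      const_deriv I (fun s => p s 0) 0 (fun s hs => hp0 s hs) t (hint' htI)
    have heq := (hadj' htI).1.unique h0
    have hpt := hp0 t htI
    rw [hpt] at heq
    have : η t * s1 = -(c5 * p t 2) := by linarith
    have := congrArg (fun z => z * s1) this
    calc η t = η t * s1 * s1 := by rw [mul_assoc, hs1sq, mul_one]
    _ = -(c5 * p t 2) * s1 := this
    _ = -s1 * c5 * p t 2 := by ring
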